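/- Let G be a compact topological group acting separately continuously and linearly on a locally convex topological vector space E such that every G-orbit spans a finite-dimensional subspace of E. Then the dual (contragredient) action of G on the continuous dual E' equipped with the weak-* topology is jointly continuous. -/

import Mathlib

/-- The dual (contragredient) action of `g` on a continuous functional `φ`, as an element
of the weak-* dual: `(g · φ)(v) = φ(g⁻¹ · v)`. -/
noncomputable def dualAct {G E : Type*} [Group G]
    [AddCommGroup E] [Module ℝ E] [TopologicalSpace E]
    (ρ : G →* (E →ₗ[ℝ] E)) (hρ : ∀ g : G, Continuous (ρ g))
    (g : G) (φ : WeakDual ℝ E) : WeakDual ℝ E :=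
  ContinuousLinearMap.comp (φ : E →L[ℝ] ℝ) ⟨ρ g⁻¹, hρ g⁻¹⟩

theorem stmt16 (G E : Type*) [Group G] [TopologicalSpace G] [IsTopologicalGroup G]
    [CompactSpace G]
    [AddCommGroup E] [Module ℝ E] [TopologicalSpace E] [IsTopologicalAddGroup E]
    [ContinuousSMul ℝ E] [LocallyConvexSpace ℝ E]
    (ρ : G →* (E →ₗ[ℝ] E))
    -- separate continuity of the action
    (hρ_cont : ∀ g : G, Continuous (ρ g))
    (hρ_cont' : ∀ v : E, Continuous fun g : G => ρ g v)
    -- every orbit spans a finite-dimensional subspace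
    (h_orbit : ∀ v : E,
      FiniteDimensional ℝ ↥(Submodule.span ℝ (Set.range fun g : G => ρ g v))) :
    Continuous fun x : G × WeakDual ℝ E => dualAct ρ hρ_cont x.1 x.2 := by
  apply WeakDual.continuous_of_continuous_eval
  intro v
  -- the orbit span
  set W : Submodule ℝ E := Submodule.span ℝ (Set.range fun g : G => ρ g v) with hW
  haveI := h_orbit v
  haveI : IsTopologicalAddGroup (SeparationQuotient E) := ⟨⟩
  -- pass to the separation quotient
  let mkL : E →L[ℝ] SeparationQuotient E := SeparationQuotient.mkCLM ℝ E
  set W' : Submodule ℝ (SeparationQuotient E) := W.map (mkL : E →ₗ[ℝ] SeparationQuotient E) with hW'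
  haveI : FiniteDimensional ℝ W' := Module.Finite.map W (mkL : E →ₗ[ℝ] SeparationQuotient E)
  -- a basis of W'
  let b := Module.finBasis ℝ W'
  set n := Module.finrank ℝ W'
  -- orbit as a map into W'
  have hmemW : ∀ g : G, ρ g⁻¹ v ∈ W := fun g =>
    Submodule.subset_span ⟨g⁻¹, rfl⟩
  let c : G → W' := fun g => ⟨mkL (ρ g⁻¹ v), ⟨ρ g⁻¹ v, hmemW g, rfl⟩⟩
  have hc : Continuous c := by
    apply Continuous.subtype_mk
    exact mkL.continuous.comp ((hρ_cont' v).comp continuous_inv)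
  -- coordinates are continuous (finite-dim Hausdorff)
  have hcoord : Continuous fun x : W' => b.equivFun x :=
    LinearMap.continuous_of_finiteDimensional (b.equivFun : W' →ₗ[ℝ] (Fin n → ℝ))
  -- choose preimages of the basis vectors
  have hpre : ∀ i : Fin n, ∃ e : E, mkL e = (b i : SeparationQuotient E) := by
    intro i
    obtain ⟨e, -, he⟩ := (b i).2
    exact ⟨e, he⟩
  choose e he using hpre
  -- the target continuous function
  have key : ∀ (g : G) (φ : WeakDual ℝ E),
      dualAct ρ hρ_cont g φ v = ∑ i, b.equivFun (c g) i * φ (e i) := by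
    intro g φ
    have h1 : mkL (ρ g⁻¹ v) = mkL (∑ i, b.equivFun (c g) i • e i) := by
      rw [map_sum]
      have : (c g : SeparationQuotient E) = ((∑ i, b.equivFun (c g) i • b i : W') : SeparationQuotient E) := by
        rw [b.sum_equivFun (c g)]
      rw [show mkL (ρ g⁻¹ v) = (c g : SeparationQuotient E) from rfl, this]
      push_cast
      simp only [map_smul, he]
    have h2 : φ (ρ g⁻¹ v) = φ (∑ i, b.equivFun (c g) i • e i) := by
      have : Inseparable (ρ g⁻¹ v) (∑ i, b.equivFun (c g) i • e i) :=
        SeparationQuotient.mk_eq_mk.mp h1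
      exact (this.map φ.continuous).eq
    have h3 : dualAct ρ hρ_cont g φ v = φ (ρ g⁻¹ v) := rfl
    rw [h3, h2, map_sum]
    simp [smul_eq_mul]
  have : (fun x : G × WeakDual ℝ E => dualAct ρ hρ_cont x.1 x.2 v) =
      fun x : G × WeakDual ℝ E => ∑ i, b.equivFun (c x.1) i * x.2 (e i) := by
    funext x; exact key x.1 x.2
  rw [this]
  apply continuous_finset_sum
  intro i _
  exact ((continuous_apply i).comp (hcoord.comp (hc.comp continuous_fst))).mul
    ((WeakDual.eval_continuous (e i)).comp continuous_snd)
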